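/- Let d ≥ 2 and define the Werner–Holevo channels Φ₀, Φ₁ on Matrix (Fin d) (Fin d) ℂ by Φ₀(X) = (Tr(X)·1 + Xᵀ)/(d+1) and Φ₁(X) = (Tr(X)·1 − Xᵀ)/(d−1). Then for every finite index type Z, every density operator ρ on (Fin d) × Z, and every pair of PPT operators P₀, P₁ on (Fin d) × Z with P₀ + P₁ = 1: ⟨P₀ − P₁, ((Φ₀ − Φ₁) ⊗ id_Z)(ρ)⟩ ≤ 4/(d+1). (Consequently ‖Φ₀ − Φ₁‖_PPT = ‖Φ₀ − Φ₁‖_LOCC = 4/(d+1), even though ‖Φ₀ − Φ₁‖_⋄ = 2.) -/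

import Mathlib

open Matrix Kronecker BigOperators ComplexOrder

noncomputable def traceNorm {n : Type*} [Fintype n] [DecidableEq n] (A : Matrix n n ℂ) : ℝ :=
  (((Matrix.posSemidef_conjTranspose_mul_self A).1.eigenvectorUnitary : Matrix n n ℂ) *
    Matrix.diagonal (((↑) : ℝ → ℂ) ∘ Real.sqrt ∘ (Matrix.posSemidef_conjTranspose_mul_self A).1.eigenvalues) *
    (star (Matrix.posSemidef_conjTranspose_mul_self A).1.eigenvectorUnitary : Matrix n n ℂ)).trace.re

def IsDensity {n : Type*} [Fintype n] (ρ : Matrix n n ℂ) : Prop :=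
  ρ.PosSemidef ∧ ρ.trace = 1

def tensorId {X Y Z : Type*} (Φ : Matrix X X ℂ → Matrix Y Y ℂ)
    (ρ : Matrix (X × Z) (X × Z) ℂ) : Matrix (Y × Z) (Y × Z) ℂ :=
  Matrix.of fun p q => Φ (Matrix.of fun x x' => ρ (x, p.2) (x', q.2)) p.1 q.1

noncomputable def ChoiMatrix {X Y : Type*} [Fintype X] [DecidableEq X] [Fintype Y]
    (Φ : Matrix X X ℂ → Matrix Y Y ℂ) : Matrix (Y × X) (Y × X) ℂ :=
  ∑ j : X, ∑ k : X, (Φ (Matrix.single j k 1)) ⊗ₖ (Matrix.single j k 1)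

def IsChannel {X Y : Type*} [Fintype X] [DecidableEq X] [Fintype Y]
    (Φ : Matrix X X ℂ →ₗ[ℂ] Matrix Y Y ℂ) : Prop :=
  (∀ M, (Φ M).trace = M.trace) ∧ (ChoiMatrix (⇑Φ)).PosSemidef

def SeparableOp {Y Z : Type*} [Fintype Y] [Fintype Z]
    (P : Matrix (Y × Z) (Y × Z) ℂ) : Prop :=
  ∃ (N : ℕ) (Q : Fin N → Matrix Y Y ℂ) (R : Fin N → Matrix Z Z ℂ),
    (∀ i, (Q i).PosSemidef) ∧ (∀ i, (R i).PosSemidef) ∧ P = ∑ i, Q i ⊗ₖ R i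

def partialTranspose {Y Z : Type*} (M : Matrix (Y × Z) (Y × Z) ℂ) :
    Matrix (Y × Z) (Y × Z) ℂ :=
  Matrix.of fun p q => M (p.1, q.2) (q.1, p.2)

def IsPPT {Y Z : Type*} [Fintype Y] [Fintype Z] (M : Matrix (Y × Z) (Y × Z) ℂ) : Prop :=
  M.PosSemidef ∧ (partialTranspose M).PosSemidef

section Aux

set_option linter.unusedSectionVars false

variable {d : ℕ} {Z : Type*} [Fintype Z] [DecidableEq Z]

/-- partial trace over the first factor -/
noncomputable def ptr (R : Matrix (Fin d × Z) (Fin d × Z) ℂ) : Matrix Z Z ℂ :=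
  Matrix.of fun z z' => ∑ x : Fin d, R (x, z) (x, z')

/-- partial transpose on the first factor -/
def gam (R : Matrix (Fin d × Z) (Fin d × Z) ℂ) : Matrix (Fin d × Z) (Fin d × Z) ℂ :=
  Matrix.of fun p q => R (q.1, p.2) (p.1, q.2)

lemma gam_eq (R : Matrix (Fin d × Z) (Fin d × Z) ℂ) : gam R = (partialTranspose R)ᵀ := rfl

lemma gam_one : gam (1 : Matrix (Fin d × Z) (Fin d × Z) ℂ) = 1 := by
  ext ⟨y,z⟩ ⟨y',z'⟩
  simp [gam, Matrix.one_apply, Prod.ext_iff, and_comm, eq_comm]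

lemma gam_sub (A B : Matrix (Fin d × Z) (Fin d × Z) ℂ) : gam (A - B) = gam A - gam B := rfl

lemma ptr_sub (A B : Matrix (Fin d × Z) (Fin d × Z) ℂ) : ptr (A - B) = ptr A - ptr B := by
  ext z z'; simp [ptr, Finset.sum_sub_distrib]

lemma ptr_one : ptr (1 : Matrix (Fin d × Z) (Fin d × Z) ℂ) = (d : ℂ) • 1 := by
  ext z z'
  simp [ptr, Matrix.one_apply, Prod.ext_iff]

def FF (a b : Fin d) : Matrix (Fin d × Z) (Fin d × Z) ℂ :=
  (Matrix.single a b (1:ℂ)) ⊗ₖ (1 : Matrix Z Z ℂ)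

lemma FF_mul (a b c e : Fin d) (R : Matrix (Fin d × Z) (Fin d × Z) ℂ) :
    FF a b * R * (FF c e : Matrix (Fin d × Z) (Fin d × Z) ℂ) =
    Matrix.of fun p q => (if p.1 = a then 1 else 0) * (if q.1 = e then 1 else 0)
      * R (b, p.2) (c, q.2) := by
  ext ⟨y,z⟩ ⟨y',z'⟩
  simp [FF, Matrix.mul_apply, Fintype.sum_prod_type, Matrix.single,
    Matrix.one_apply, ite_and, eq_comm]

lemma FF_conjTranspose (a b : Fin d) :
    (FF a b : Matrix (Fin d × Z) (Fin d × Z) ℂ)ᴴ = FF b a := by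
  ext ⟨y,z⟩ ⟨y',z'⟩
  simp [FF, Matrix.single, Matrix.one_apply, ite_and, eq_comm, and_comm]
  aesop

lemma key (R : Matrix (Fin d × Z) (Fin d × Z) ℂ) :
    ∑ i : Fin d, ∑ j : Fin d, (FF i j - FF j i) * R * (FF i j - FF j i)ᴴ
      = (2:ℂ) • ((1 : Matrix (Fin d) (Fin d) ℂ) ⊗ₖ ptr R - gam R) := by
  have h : ∀ i j : Fin d,
      (FF i j - FF j i) * R * ((FF i j - FF j i : Matrix (Fin d × Z) (Fin d × Z) ℂ))ᴴ
      = FF i j * R * FF j i - FF i j * R * FF i j - FF j i * R * FF j i + FF j i * R * FF i j := by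
    intro i j
    simp only [conjTranspose_sub, FF_conjTranspose, sub_mul, mul_sub]
    abel
  ext ⟨y,z⟩ ⟨y',z'⟩
  simp only [Matrix.sum_apply, h, FF_mul, Matrix.sub_apply, Matrix.add_apply, Matrix.of_apply,
    Matrix.smul_apply, kroneckerMap_apply, Matrix.one_apply, gam, ite_mul, mul_ite, one_mul,
    mul_one, zero_mul, mul_zero, smul_eq_mul]
  simp only [Finset.sum_sub_distrib, Finset.sum_add_distrib, Finset.sum_ite_irrel,
    Finset.sum_ite_eq, Finset.sum_ite_eq', Finset.mem_univ, if_true, Finset.sum_const,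
    ptr, Matrix.of_apply]
  split_ifs with hyy
  · subst hyy
    simp
    ring
  · simp [hyy]
    ring

lemma psd_add {M N : Matrix (Fin d × Z) (Fin d × Z) ℂ}
    (hM : M.PosSemidef) (hN : N.PosSemidef) : (M + N).PosSemidef :=
  ⟨hM.1.add hN.1, fun x => by
    simpa [mul_add, add_mul] using add_nonneg (hM.2 x) (hN.2 x)⟩

lemma psd_smul {M : Matrix (Fin d × Z) (Fin d × Z) ℂ}
    (hM : M.PosSemidef) {c : ℝ} (hc : 0 ≤ c) : ((c:ℂ) • M).PosSemidef := by
  constructor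
  · unfold Matrix.IsHermitian
    rw [conjTranspose_smul, hM.1.eq]
    congr 1
    simp [Complex.star_def, Complex.conj_ofReal]
  · exact (hM.smul (a := (c:ℂ)) (by exact_mod_cast Complex.zero_le_real.2 hc)).2

lemma reduction {R : Matrix (Fin d × Z) (Fin d × Z) ℂ} (hR : R.PosSemidef) :
    ((1 : Matrix (Fin d) (Fin d) ℂ) ⊗ₖ ptr R - gam R).PosSemidef := by
  set M := (1 : Matrix (Fin d) (Fin d) ℂ) ⊗ₖ ptr R - gam R with hM
  have h2 : ((2:ℂ) • M).PosSemidef := by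
    rw [← key R]
    apply Finset.sum_induction _ _ (fun A B hA hB => psd_add hA hB) Matrix.PosSemidef.zero
    intro i _
    apply Finset.sum_induction _ _ (fun A B hA hB => psd_add hA hB) Matrix.PosSemidef.zero
    intro j _
    exact hR.mul_mul_conjTranspose_same _
  have : M = (((2:ℝ)⁻¹ : ℝ) : ℂ) • ((2:ℂ) • M) := by
    rw [smul_smul]; norm_num
  rw [this]
  exact psd_smul h2 (by norm_num)

lemma psd_trace_re_nonneg {M : Matrix (Fin d × Z) (Fin d × Z) ℂ} (hM : M.PosSemidef) :
    0 ≤ (M.trace).re := by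
  rw [Matrix.trace]
  have : (∑ i, M.diag i).re = ∑ i, (M.diag i).re := by
    simp [Complex.re_sum]
  rw [this]
  apply Finset.sum_nonneg
  intro i _
  have h := hM.re_dotProduct_nonneg (Pi.single i 1)
  simpa [dotProduct, mulVec, Pi.single_apply, Finset.sum_ite_eq, Matrix.diag] using h

lemma trace_mul_psd_nonneg {A B : Matrix (Fin d × Z) (Fin d × Z) ℂ}
    (hA : A.PosSemidef) (hB : B.PosSemidef) : 0 ≤ ((A * B).trace).re := by
  obtain ⟨s, hs, hss⟩ : ∃ s : Matrix (Fin d × Z) (Fin d × Z) ℂ, s.PosSemidef ∧ s * s = A :=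
    open scoped MatrixOrder in ⟨CFC.sqrt A, (CFC.sqrt_nonneg A).posSemidef, CFC.sqrt_mul_sqrt_self A hA.nonneg⟩
  have h1 : (A * B).trace = (s * B * s).trace := by
    rw [← hss, trace_mul_cycle, trace_mul_cycle]
  rw [h1]
  have : (s * B * s) = s * B * sᴴ := by rw [hs.1.eq]
  exact psd_trace_re_nonneg (this ▸ hB.mul_mul_conjTranspose_same s)

lemma sum_swap13 {α β : Type*} [Fintype α] [Fintype β] (f : α → β → α → ℂ) :
    ∑ a, ∑ b, ∑ c, f a b c = ∑ a, ∑ b, ∑ c, f c b a := by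
  rw [Finset.sum_comm]
  conv_rhs => rw [Finset.sum_comm]
  exact Finset.sum_congr rfl fun b _ => Finset.sum_comm

lemma trace_gam (A B : Matrix (Fin d × Z) (Fin d × Z) ℂ) :
    (A * gam B).trace = (gam A * B).trace := by
  simp only [Matrix.trace, Matrix.diag, Matrix.mul_apply, gam, Matrix.of_apply,
    Fintype.sum_prod_type]
  exact sum_swap13 (fun a b c => ∑ e, A (a,b) (c,e) * B (a,e) (c,b))

lemma trace_kron (A : Matrix (Fin d × Z) (Fin d × Z) ℂ) (N : Matrix Z Z ℂ) :
    (A * ((1 : Matrix (Fin d) (Fin d) ℂ) ⊗ₖ N)).trace = (ptr A * N).trace := by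
  simp only [Matrix.trace, Matrix.diag, Matrix.mul_apply, ptr, Matrix.of_apply,
    kroneckerMap_apply, Matrix.one_apply, Fintype.sum_prod_type, ite_mul, mul_ite,
    one_mul, zero_mul, mul_zero, mul_one]
  rw [Finset.sum_comm]
  simp only [Finset.sum_ite_irrel, Finset.sum_const_zero, Finset.sum_ite_eq',
    Finset.mem_univ, if_true]
  refine Finset.sum_congr rfl fun x _ => ?_
  rw [Finset.sum_comm]
  simp [Finset.sum_mul]

end Aux

section Main

set_option linter.unusedSectionVars false

variable {d : ℕ} {Z : Type*} [Fintype Z] [DecidableEq Z]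

lemma kron_sub (N₁ N₂ : Matrix Z Z ℂ) :
    (1 : Matrix (Fin d) (Fin d) ℂ) ⊗ₖ (N₁ - N₂) = 1 ⊗ₖ N₁ - 1 ⊗ₖ N₂ := by
  ext ⟨y,z⟩ ⟨y',z'⟩
  simp [mul_sub]

lemma kron_smul' (c : ℂ) (N : Matrix Z Z ℂ) :
    (1 : Matrix (Fin d) (Fin d) ℂ) ⊗ₖ (c • N) = c • ((1 : Matrix (Fin d) (Fin d) ℂ) ⊗ₖ N) := by
  ext ⟨y,z⟩ ⟨y',z'⟩
  simp [smul_eq_mul]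
  ring

lemma tensorId_formula (Φ₀ Φ₁ : Matrix (Fin d) (Fin d) ℂ → Matrix (Fin d) (Fin d) ℂ)
    (hΦ₀ : ∀ X, Φ₀ X = ((d : ℂ) + 1)⁻¹ • (X.trace • (1 : Matrix (Fin d) (Fin d) ℂ) + Xᵀ))
    (hΦ₁ : ∀ X, Φ₁ X = ((d : ℂ) - 1)⁻¹ • (X.trace • (1 : Matrix (Fin d) (Fin d) ℂ) - Xᵀ))
    (M : Matrix (Fin d × Z) (Fin d × Z) ℂ) :
    tensorId (fun X => Φ₀ X - Φ₁ X) M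
      = (((d : ℂ) + 1)⁻¹ - ((d : ℂ) - 1)⁻¹) • ((1 : Matrix (Fin d) (Fin d) ℂ) ⊗ₖ ptr M)
        + (((d : ℂ) + 1)⁻¹ + ((d : ℂ) - 1)⁻¹) • gam M := by
  ext ⟨y,z⟩ ⟨y',z'⟩
  simp only [tensorId, hΦ₀, hΦ₁, Matrix.of_apply, Matrix.sub_apply, Matrix.add_apply,
    Matrix.smul_apply, Matrix.transpose_apply, Matrix.one_apply, Matrix.trace, Matrix.diag,
    ptr, gam, kroneckerMap_apply, smul_eq_mul]
  ring

end Main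

/-- for the Werner–Holevo channels, PPT measurements give correctness at most
that of unentangled strategies: `⟨P₀ - P₁, ((Φ₀ - Φ₁) ⊗ id)(ρ)⟩ ≤ 4/(d+1)`. -/
theorem werner_holevo_ppt_norm_bound
    (d : ℕ) (hd : 2 ≤ d)
    (Φ₀ Φ₁ : Matrix (Fin d) (Fin d) ℂ → Matrix (Fin d) (Fin d) ℂ)
    (hΦ₀ : ∀ X, Φ₀ X = ((d : ℂ) + 1)⁻¹ • (X.trace • (1 : Matrix (Fin d) (Fin d) ℂ) + Xᵀ))
    (hΦ₁ : ∀ X, Φ₁ X = ((d : ℂ) - 1)⁻¹ • (X.trace • (1 : Matrix (Fin d) (Fin d) ℂ) - Xᵀ))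
    (Z : Type*) [Fintype Z] [DecidableEq Z]
    (ρ : Matrix (Fin d × Z) (Fin d × Z) ℂ) (hρ : IsDensity ρ)
    (P₀ P₁ : Matrix (Fin d × Z) (Fin d × Z) ℂ)
    (hP₀ : IsPPT P₀) (hP₁ : IsPPT P₁) (hmeas : P₀ + P₁ = 1) :
    (((P₀ - P₁)ᴴ * tensorId (fun X => Φ₀ X - Φ₁ X) ρ).trace).re ≤ 4 / ((d : ℝ) + 1) := by
  have hd2 : (2:ℝ) ≤ (d:ℝ) := by exact_mod_cast hd
  have h1 : ((d : ℂ) + 1) ≠ 0 := by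
    intro h
    have h' : ((d:ℝ) + 1) = 0 := by
      have := congrArg Complex.re h; simpa using this
    linarith
  have h2 : ((d : ℂ) - 1) ≠ 0 := by
    intro h
    have h' : ((d:ℝ) - 1) = 0 := by
      have := congrArg Complex.re h; simpa using this
    linarith
  have h3 : ((d : ℂ)^2 - 1) ≠ 0 := by
    have : (d:ℂ)^2 - 1 = ((d:ℂ) + 1) * ((d:ℂ) - 1) := by ring
    rw [this]; exact mul_ne_zero h1 h2
  have h1' : ((1:ℂ) + (d:ℂ)) ≠ 0 := by rw [add_comm]; exact h1
  have h2' : ((-1:ℂ) + (d:ℂ)) ≠ 0 := by rw [add_comm, ← sub_eq_add_neg]; exact h2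
  have h3' : ((-1:ℂ) + (d:ℂ)^2) ≠ 0 := by rw [add_comm, ← sub_eq_add_neg]; exact h3
  set a : ℂ := ((d : ℂ) + 1)⁻¹ - ((d : ℂ) - 1)⁻¹ with ha
  set b : ℂ := ((d : ℂ) + 1)⁻¹ + ((d : ℂ) - 1)⁻¹ with hb
  have hHerm : (P₀ - P₁)ᴴ = P₀ - P₁ := by
    rw [conjTranspose_sub, hP₀.1.1.eq, hP₁.1.1.eq]
  set Δ := P₀ - P₁ with hΔ
  set K : Matrix (Fin d × Z) (Fin d × Z) ℂ :=
    ((4:ℂ)/((d:ℂ)^2 - 1)) • (((d:ℂ) - 1) • gam P₁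
      + ((1 : Matrix (Fin d) (Fin d) ℂ) ⊗ₖ ptr P₀ - gam P₀)) with hK
  -- step 1 : the trace identity
  have step1 : (Δ * tensorId (fun X => Φ₀ X - Φ₁ X) ρ).trace
      = (((a • ((1 : Matrix (Fin d) (Fin d) ℂ) ⊗ₖ ptr Δ) + b • gam Δ)) * ρ).trace := by
    rw [tensorId_formula Φ₀ Φ₁ hΦ₀ hΦ₁ ρ, mul_add, add_mul, Matrix.mul_smul,
      Matrix.mul_smul, Matrix.smul_mul, Matrix.smul_mul, trace_add, trace_add,
      trace_smul, trace_smul, trace_smul, trace_smul]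
    congr 1
    · rw [trace_kron, trace_mul_comm ((1 : Matrix (Fin d) (Fin d) ℂ) ⊗ₖ ptr Δ) ρ,
        trace_kron, trace_mul_comm]
    · rw [trace_gam]
  -- step 2 : the algebraic identity
  have hP1 : P₁ = 1 - P₀ := eq_sub_of_add_eq' hmeas
  have step2 : (a • ((1 : Matrix (Fin d) (Fin d) ℂ) ⊗ₖ ptr Δ) + b • gam Δ)
      = ((4:ℂ)/((d:ℂ) + 1)) • (1 : Matrix (Fin d × Z) (Fin d × Z) ℂ) - K := by
    rw [ha, hb, hK, hΔ, hP1, gam_sub, gam_sub, gam_one, ptr_sub, ptr_sub, ptr_one,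
      kron_sub, kron_sub, kron_smul', one_kronecker_one]
    match_scalars
    · field_simp [h1, h2, h3, h1', h2', h3']
      ring
    · field_simp [h1, h2, h3, h1', h2', h3']
      ring
    · field_simp [h1, h2, h3, h1', h2', h3']
      ring
  -- step 3 : K is positive semidefinite
  have hKpsd : K.PosSemidef := by
    have hgam : (gam P₁).PosSemidef := by
      rw [gam_eq]; exact hP₁.2.transpose
    have hred : ((1 : Matrix (Fin d) (Fin d) ℂ) ⊗ₖ ptr P₀ - gam P₀).PosSemidef :=
      reduction hP₀.1
    have hsum : (((d:ℂ) - 1) • gam P₁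
        + ((1 : Matrix (Fin d) (Fin d) ℂ) ⊗ₖ ptr P₀ - gam P₀)).PosSemidef := by
      apply psd_add _ hred
      have : ((d:ℂ) - 1) = (((d:ℝ) - 1 : ℝ) : ℂ) := by push_cast; ring
      rw [this]
      exact psd_smul hgam (by linarith)
    have : ((4:ℂ)/((d:ℂ)^2 - 1)) = (((4/((d:ℝ)^2 - 1)) : ℝ) : ℂ) := by push_cast; ring
    rw [hK, this]
    apply psd_smul hsum
    have : (0:ℝ) < (d:ℝ)^2 - 1 := by nlinarith
    positivity
  -- step 4 : conclude
  rw [hHerm, step1, step2, sub_mul, Matrix.smul_mul, one_mul, trace_sub, trace_smul,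
    hρ.2, smul_eq_mul, mul_one, Complex.sub_re]
  have h4 : ((4:ℂ)/((d:ℂ) + 1)) = (((4/((d:ℝ) + 1)) : ℝ) : ℂ) := by push_cast; ring
  rw [h4, Complex.ofReal_re]
  have := trace_mul_psd_nonneg hKpsd hρ.1
  linarith
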